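/- Fix an even width L and a probability vector p = (p₁,…,p_n) of positive reals summing to 1 in non-increasing order. Let d be an integer with 1 ≤ d ≤ L/2 − 1, let A = {L/2 − d + 1, …, L/2 + d} and l' = L/2 − d. Then for all indices 1 ≤ k₁ ≤ k₂ ≤ n and every integer N, G(A ∪ {l'}, [k₁,k₂], N) = max over j ∈ {0, 1, …, k₂ − k₁ + 1} of [ G(A, [k₁ + j, k₂], N − j·2^{L−l'}) + (Σ_{i=k₁}^{k₁+j−1} pᵢ)(Σ_{i=k₁}^{k₂} pᵢ) + (Σ_{i=k₁+j}^{k₂} pᵢ)(Σ_{i=k₁}^{k₁+j−1} pᵢ) ], where G over an empty index range equals 0 when its budget is ≥ 0 and −∞ when its budget is negative. -/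

import Mathlib

/-- `G p L A k₁ k₂ N` : the maximum, over length assignments `ℓ : {k₁,…,k₂} → A`
satisfying `Σ_{i=k₁}^{k₂} 2^{L-ℓ(i)} ≤ N`, of
`Σ_{i=k₁}^{k₂} Σ_{i'=k₁}^{k₂} pᵢ p_{i'} 𝟙[ℓ(i) + ℓ(i') ≤ L]`.  By the `sSup` over
`EReal` conventions, `G(A,[k₁,k₁-1],N) = 0` for `N ≥ 0`, and `G = -∞` (i.e. `⊥`)
whenever `N < 0` or no assignment satisfies the constraint. -/
noncomputable def G (p : ℕ → ℝ) (L : ℕ) (A : Finset ℕ) (k₁ k₂ : ℕ) (N : ℤ) : EReal :=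
  sSup {x : EReal | ∃ ℓ : ℕ → ℕ,
    (∀ i ∈ Finset.Icc k₁ k₂, ℓ i ∈ A) ∧
    ((∑ i ∈ Finset.Icc k₁ k₂, (2 : ℤ) ^ (L - ℓ i)) ≤ N) ∧
    x = ((∑ i ∈ Finset.Icc k₁ k₂, ∑ i' ∈ Finset.Icc k₁ k₂,
      if ℓ i + ℓ i' ≤ L then p i * p i' else 0 : ℝ) : EReal)}

lemma strictMono_fin_add {m : ℕ} (f : Fin m → ℕ) (hf : StrictMono f) :
    ∀ (s t : ℕ) (h : t + s < m), f ⟨t, by omega⟩ + s ≤ f ⟨t + s, h⟩ := by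
  intro s
  induction s with
  | zero => intro t h; simp
  | succ s ih =>
    intro t h
    have h' : t + s < m := by omega
    have h1 := ih t h'
    have h2 : f ⟨t + s, h'⟩ < f ⟨t + (s + 1), h⟩ := hf (by simp [Fin.lt_def])
    omega

lemma enum_le {T : Finset ℕ} {m b : ℕ} (h : T.card = m) (hT : ∀ u ∈ T, u ≤ b) (t : Fin m) :
    T.orderEmbOfFin h t + (m - 1 - (t : ℕ)) ≤ b := by
  have hlt : (t : ℕ) + (m - 1 - (t : ℕ)) < m := by have := t.isLt; omega
  have h1 := strictMono_fin_add _ (T.orderEmbOfFin h).strictMono (m - 1 - (t : ℕ)) (t : ℕ) hlt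
  have h2 := hT _ (Finset.orderEmbOfFin_mem T h ⟨(t : ℕ) + (m - 1 - (t : ℕ)), hlt⟩)
  have he : (⟨(t : ℕ), by omega⟩ : Fin m) = t := by ext; rfl
  rw [he] at h1
  omega

lemma sum_orderEmbOfFin {M : Type*} [AddCommMonoid M] (T : Finset ℕ) {m : ℕ}
    (h : T.card = m) (g : ℕ → M) :
    ∑ u ∈ T, g u = ∑ t : Fin m, g (T.orderEmbOfFin h t) := by
  have himg : Finset.image (T.orderEmbOfFin h) Finset.univ = T := by
    apply Finset.coe_injective
    rw [Finset.coe_image, Finset.coe_univ, Set.image_univ, Finset.range_orderEmbOfFin]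
  classical
  have h2 : ∑ u ∈ Finset.image (T.orderEmbOfFin h) Finset.univ, g u
      = ∑ t : Fin m, g (T.orderEmbOfFin h t) :=
    Finset.sum_image (fun x _ y _ hxy => (T.orderEmbOfFin h).injective hxy)
  rw [himg] at h2
  exact h2

lemma orderEmbOfFin_Icc {a b m : ℕ} (h : (Finset.Icc a b).card = m) (t : Fin m) :
    (Finset.Icc a b).orderEmbOfFin h t = a + t := by
  have hm : m = b + 1 - a := by rw [← h, Nat.card_Icc]
  have hu := Finset.orderEmbOfFin_unique (f := fun t : Fin m => a + (t : ℕ)) h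
    (fun x => by have hx := x.isLt; simp only [Finset.mem_Icc]; omega)
    (fun x y hxy => by exact Nat.add_lt_add_left (Fin.lt_def.mp hxy) a)
  exact (congrFun hu t).symm

lemma sum_Icc_fin {M : Type*} [AddCommMonoid M] (a b : ℕ) {m : ℕ}
    (h : (Finset.Icc a b).card = m) (g : ℕ → M) :
    ∑ u ∈ Finset.Icc a b, g u = ∑ t : Fin m, g (a + t) := by
  rw [sum_orderEmbOfFin _ h]
  exact Finset.sum_congr rfl fun t _ => by rw [orderEmbOfFin_Icc]

lemma sum_Icc_split {M : Type*} [AddCommMonoid M] (g : ℕ → M) (k₁ k₂ j : ℕ)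
    (hk1 : 1 ≤ k₁) (hj : k₁ + j ≤ k₂ + 1) :
    ∑ i ∈ Finset.Icc k₁ k₂, g i
      = (∑ i ∈ Finset.Icc k₁ (k₁ + j - 1), g i) + ∑ i ∈ Finset.Icc (k₁ + j) k₂, g i := by
  have h1 : Finset.Icc k₁ k₂ = Finset.Ico k₁ (k₂ + 1) := by rw [Finset.Ico_add_one_right_eq_Icc]
  have h2 : Finset.Icc k₁ (k₁ + j - 1) = Finset.Ico k₁ (k₁ + j) := by
    rw [← Finset.Ico_add_one_right_eq_Icc]; congr 1; omega
  have h3 : Finset.Icc (k₁ + j) k₂ = Finset.Ico (k₁ + j) (k₂ + 1) := by rw [Finset.Ico_add_one_right_eq_Icc]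
  rw [h1, h2, h3, Finset.sum_Ico_consecutive _ (by omega) (by omega)]

/-- (Theorem: going left in the length sequence, to `l' = L/2 - d`.)
For an even width `L`, `1 ≤ d ≤ L/2 - 1`, `A = {L/2-d+1, …, L/2+d}` and
`l' = L/2 - d`, for all `1 ≤ k₁ ≤ k₂ ≤ n` and every integer `N`:
`G(A ∪ {l'}, [k₁,k₂], N) = max_{j ∈ {0,…,k₂-k₁+1}} [ G(A, [k₁+j,k₂], N - j·2^{L-l'})
+ (Σ_{i=k₁}^{k₁+j-1} pᵢ)(Σ_{i=k₁}^{k₂} pᵢ) + (Σ_{i=k₁+j}^{k₂} pᵢ)(Σ_{i=k₁}^{k₁+j-1} pᵢ) ]`. -/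
theorem stmt11 (n L : ℕ) (hL : Even L) (p : ℕ → ℝ)
    (hp : ∀ i ∈ Finset.Icc 1 n, 0 < p i)
    (hps : ∑ i ∈ Finset.Icc 1 n, p i = 1)
    (hpm : ∀ i j : ℕ, 1 ≤ i → i ≤ j → j ≤ n → p j ≤ p i)
    (d : ℕ) (hd1 : 1 ≤ d) (hd2 : d ≤ L / 2 - 1)
    (k₁ k₂ : ℕ) (hk1 : 1 ≤ k₁) (hk12 : k₁ ≤ k₂) (hk2 : k₂ ≤ n) (N : ℤ) :
    G p L (Finset.Icc (L / 2 - d + 1) (L / 2 + d) ∪ {L / 2 - d}) k₁ k₂ N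
      = ⨆ j ∈ Finset.Icc 0 (k₂ - k₁ + 1),
          (G p L (Finset.Icc (L / 2 - d + 1) (L / 2 + d)) (k₁ + j) k₂
              (N - (j : ℤ) * 2 ^ (L - (L / 2 - d))) +
            (((∑ i ∈ Finset.Icc k₁ (k₁ + j - 1), p i) * (∑ i ∈ Finset.Icc k₁ k₂, p i) +
              (∑ i ∈ Finset.Icc (k₁ + j) k₂, p i) *
                (∑ i ∈ Finset.Icc k₁ (k₁ + j - 1), p i) : ℝ) : EReal)) := by

  classical
  obtain ⟨c, hc⟩ := hL
  have hc2 : L / 2 = c := by omega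
  set l' := L / 2 - d with hl'
  set A := Finset.Icc (l' + 1) (L / 2 + d) with hA
  have hppos : ∀ i, k₁ ≤ i → i ≤ k₂ → 0 < p i := fun i h1 h2 =>
    hp i (Finset.mem_Icc.2 ⟨le_trans hk1 h1, le_trans h2 hk2⟩)
  have hub : ∀ a ∈ A ∪ {l'}, a ≤ L / 2 + d := by
    intro a ha
    rcases Finset.mem_union.mp ha with h | h
    · rw [hA] at h; exact (Finset.mem_Icc.mp h).2
    · rw [Finset.mem_singleton] at h; omega
  have hcondl : ∀ a b : ℕ, a ≤ L / 2 + d → (a = l' ∨ b = l') → b ≤ L / 2 + d → a + b ≤ L := by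
    intro a b ha hl hb; omega
  apply le_antisymm
  · -- LHS ≤ RHS
    apply sSup_le
    rintro x ⟨ℓ, hmemℓ, hbud, rfl⟩
    set S := (Finset.Icc k₁ k₂).filter (fun i => ℓ i = l') with hS
    set T := (Finset.Icc k₁ k₂).filter (fun i => ¬ℓ i = l') with hT
    set jj := S.card with hjj
    have hjm : jj + T.card = k₂ + 1 - k₁ := by
      rw [hjj, hT, hS, Finset.card_filter_add_card_filter_not, Nat.card_Icc]
    have hjmem : jj ∈ Finset.Icc 0 (k₂ - k₁ + 1) := Finset.mem_Icc.2 ⟨Nat.zero_le _, by omega⟩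
    refine le_trans ?_ (le_iSup₂ (f := fun j (_ : j ∈ Finset.Icc 0 (k₂ - k₁ + 1)) =>
      G p L A (k₁ + j) k₂ (N - (j : ℤ) * 2 ^ (L - l')) +
        (((∑ i ∈ Finset.Icc k₁ (k₁ + j - 1), p i) * (∑ i ∈ Finset.Icc k₁ k₂, p i) +
          (∑ i ∈ Finset.Icc (k₁ + j) k₂, p i) *
            (∑ i ∈ Finset.Icc k₁ (k₁ + j - 1), p i) : ℝ) : EReal)) jj hjmem)
    -- enumeration of T
    have hQcard : (Finset.Icc (k₁ + jj) k₂).card = T.card := by rw [Nat.card_Icc]; omega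
    have hTsub : ∀ u ∈ T, k₁ ≤ u ∧ u ≤ k₂ := fun u hu =>
      Finset.mem_Icc.mp (Finset.mem_filter.mp hu).1
    have hτmem : ∀ t : Fin T.card, T.orderEmbOfFin rfl t ∈ T :=
      fun t => Finset.orderEmbOfFin_mem T rfl t
    have hτle : ∀ t : Fin T.card, T.orderEmbOfFin rfl t ≤ k₁ + jj + t := by
      intro t
      have h1 := enum_le rfl (fun u hu => (hTsub u hu).2) t
      have h2 := t.isLt
      omega
    have hτA : ∀ t : Fin T.card, ℓ (T.orderEmbOfFin rfl t) ∈ A ∧ ℓ (T.orderEmbOfFin rfl t) ≠ l' := by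
      intro t
      have h2 := Finset.mem_filter.mp (hτmem t)
      rcases Finset.mem_union.mp (hmemℓ _ h2.1) with h | h
      · exact ⟨h, h2.2⟩
      · exact absurd (Finset.mem_singleton.mp h) h2.2
    -- the shifted assignment
    set ℓ₂ : ℕ → ℕ := fun i =>
      if h : i - (k₁ + jj) < T.card then ℓ (T.orderEmbOfFin rfl ⟨i - (k₁ + jj), h⟩) else L / 2
      with hℓ₂def
    have hℓ₂ : ∀ t : Fin T.card, ℓ₂ (k₁ + jj + (t : ℕ)) = ℓ (T.orderEmbOfFin rfl t) := by
      intro t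
      have hlt : k₁ + jj + (t : ℕ) - (k₁ + jj) < T.card := by have := t.isLt; omega
      have he : (⟨k₁ + jj + (t : ℕ) - (k₁ + jj), hlt⟩ : Fin T.card) = t := by
        ext
        show k₁ + jj + (t : ℕ) - (k₁ + jj) = (t : ℕ)
        omega
      simp only [hℓ₂def]
      rw [dif_pos hlt, he]
    have hmem₂ : ∀ i ∈ Finset.Icc (k₁ + jj) k₂, ℓ₂ i ∈ A := by
      intro i hi
      obtain ⟨h1, h2⟩ := Finset.mem_Icc.mp hi
      have ht : i - (k₁ + jj) < T.card := by omega
      have hieq : i = k₁ + jj + ((⟨i - (k₁ + jj), ht⟩ : Fin T.card) : ℕ) := by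
        show i = k₁ + jj + (i - (k₁ + jj))
        omega
      rw [hieq, hℓ₂ ⟨i - (k₁ + jj), ht⟩]
      exact (hτA _).1
    -- budget
    have hbudsplit : (∑ i ∈ S, (2 : ℤ) ^ (L - ℓ i)) + ∑ i ∈ T, (2 : ℤ) ^ (L - ℓ i)
        = ∑ i ∈ Finset.Icc k₁ k₂, (2 : ℤ) ^ (L - ℓ i) := by
      rw [hS, hT]
      exact Finset.sum_filter_add_sum_filter_not _ _ _
    have hbudS : ∑ i ∈ S, (2 : ℤ) ^ (L - ℓ i) = (jj : ℤ) * 2 ^ (L - l') := by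
      have hcongr : ∀ i ∈ S, (2 : ℤ) ^ (L - ℓ i) = (2 : ℤ) ^ (L - l') :=
        fun i hi => by rw [(Finset.mem_filter.mp hi).2]
      rw [Finset.sum_congr rfl hcongr, Finset.sum_const, nsmul_eq_mul]
    have hbudQ : ∑ i ∈ Finset.Icc (k₁ + jj) k₂, (2 : ℤ) ^ (L - ℓ₂ i)
        = ∑ u ∈ T, (2 : ℤ) ^ (L - ℓ u) := by
      rw [sum_Icc_fin _ _ hQcard, sum_orderEmbOfFin T rfl]
      exact Finset.sum_congr rfl fun t _ => by rw [hℓ₂ t]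
    have hbud₂ : ∑ i ∈ Finset.Icc (k₁ + jj) k₂, (2 : ℤ) ^ (L - ℓ₂ i)
        ≤ N - (jj : ℤ) * 2 ^ (L - l') := by
      rw [hbudQ]; linarith [hbud, hbudsplit, hbudS]
    have hG2 : ((∑ i ∈ Finset.Icc (k₁ + jj) k₂, ∑ i' ∈ Finset.Icc (k₁ + jj) k₂,
        if ℓ₂ i + ℓ₂ i' ≤ L then p i * p i' else 0 : ℝ) : EReal)
        ≤ G p L A (k₁ + jj) k₂ (N - (jj : ℤ) * 2 ^ (L - l')) :=
      le_sSup ⟨ℓ₂, hmem₂, hbud₂, rfl⟩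
    -- real inequality
    have hkey : (∑ i ∈ Finset.Icc k₁ k₂, ∑ i' ∈ Finset.Icc k₁ k₂,
          if ℓ i + ℓ i' ≤ L then p i * p i' else 0)
        ≤ (∑ i ∈ Finset.Icc (k₁ + jj) k₂, ∑ i' ∈ Finset.Icc (k₁ + jj) k₂,
            if ℓ₂ i + ℓ₂ i' ≤ L then p i * p i' else 0) +
          ((∑ i ∈ Finset.Icc k₁ (k₁ + jj - 1), p i) * (∑ i ∈ Finset.Icc k₁ k₂, p i) +
            (∑ i ∈ Finset.Icc (k₁ + jj) k₂, p i) * (∑ i ∈ Finset.Icc k₁ (k₁ + jj - 1), p i)) := by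
      have hubℓ : ∀ i ∈ Finset.Icc k₁ k₂, ℓ i ≤ L / 2 + d := fun i hi => hub _ (hmemℓ i hi)
      -- row computations
      have hSrow : ∀ i ∈ S, (∑ i' ∈ Finset.Icc k₁ k₂, if ℓ i + ℓ i' ≤ L then p i * p i' else 0)
          = p i * ∑ i' ∈ Finset.Icc k₁ k₂, p i' := by
        intro i hi
        obtain ⟨hiI, hil⟩ := Finset.mem_filter.mp hi
        rw [Finset.mul_sum]
        refine Finset.sum_congr rfl fun i' hi' => ?_
        rw [if_pos (hcondl _ _ (hubℓ i hiI) (Or.inl hil) (hubℓ i' hi'))]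
      have hTrow : ∀ i ∈ T, (∑ i' ∈ Finset.Icc k₁ k₂, if ℓ i + ℓ i' ≤ L then p i * p i' else 0)
          = p i * (∑ i' ∈ S, p i') + ∑ i' ∈ T, (if ℓ i + ℓ i' ≤ L then p i * p i' else 0) := by
        intro i hi
        obtain ⟨hiI, hil⟩ := Finset.mem_filter.mp hi
        rw [← Finset.sum_filter_add_sum_filter_not (Finset.Icc k₁ k₂) (fun i' => ℓ i' = l')]
        rw [← hS, ← hT]
        congr 1
        rw [Finset.mul_sum]
        refine Finset.sum_congr rfl fun i' hi' => ?_
        obtain ⟨hi'I, hi'l⟩ := Finset.mem_filter.mp hi'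
        rw [if_pos (hcondl _ _ (hubℓ i hiI) (Or.inr hi'l) (hubℓ i' hi'I))]
      have e0 : (∑ i ∈ Finset.Icc k₁ k₂, ∑ i' ∈ Finset.Icc k₁ k₂,
            if ℓ i + ℓ i' ≤ L then p i * p i' else 0)
          = (∑ i ∈ S, p i) * (∑ i' ∈ Finset.Icc k₁ k₂, p i')
            + ((∑ i ∈ T, p i) * (∑ i' ∈ S, p i')
              + ∑ i ∈ T, ∑ i' ∈ T, (if ℓ i + ℓ i' ≤ L then p i * p i' else 0)) := by
        rw [← Finset.sum_filter_add_sum_filter_not (Finset.Icc k₁ k₂) (fun i => ℓ i = l')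
          (fun i => ∑ i' ∈ Finset.Icc k₁ k₂, if ℓ i + ℓ i' ≤ L then p i * p i' else 0)]
        rw [← hS, ← hT]
        rw [Finset.sum_congr rfl hSrow, Finset.sum_congr rfl hTrow, Finset.sum_add_distrib,
          ← Finset.sum_mul, ← Finset.sum_mul]
      -- reindex the A-part
      have hDT : ∑ i ∈ T, ∑ i' ∈ T, (if ℓ i + ℓ i' ≤ L then p i * p i' else 0)
          = ∑ t : Fin T.card, ∑ s : Fin T.card,
              (if ℓ (T.orderEmbOfFin rfl t) + ℓ (T.orderEmbOfFin rfl s) ≤ L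
                then p (T.orderEmbOfFin rfl t) * p (T.orderEmbOfFin rfl s) else 0) := by
        rw [sum_orderEmbOfFin T rfl]
        exact Finset.sum_congr rfl fun t _ => sum_orderEmbOfFin T rfl _
      have hprof2 : (∑ i ∈ Finset.Icc (k₁ + jj) k₂, ∑ i' ∈ Finset.Icc (k₁ + jj) k₂,
            if ℓ₂ i + ℓ₂ i' ≤ L then p i * p i' else 0)
          = ∑ t : Fin T.card, ∑ s : Fin T.card,
              (if ℓ (T.orderEmbOfFin rfl t) + ℓ (T.orderEmbOfFin rfl s) ≤ L
                then p (k₁ + jj + (t : ℕ)) * p (k₁ + jj + (s : ℕ)) else 0) := by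
        rw [sum_Icc_fin _ _ hQcard]
        refine Finset.sum_congr rfl fun t _ => ?_
        rw [sum_Icc_fin _ _ hQcard]
        refine Finset.sum_congr rfl fun s _ => ?_
        rw [hℓ₂ t, hℓ₂ s]
      -- split an ite-sum into total minus complement
      have hsplitite : ∀ w : Fin T.card → ℝ,
          (∑ t : Fin T.card, ∑ s : Fin T.card,
            (if ℓ (T.orderEmbOfFin rfl t) + ℓ (T.orderEmbOfFin rfl s) ≤ L then w t * w s else 0))
          = (∑ t : Fin T.card, w t) * (∑ s : Fin T.card, w s)
            - ∑ t : Fin T.card, ∑ s : Fin T.card,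
              (if ℓ (T.orderEmbOfFin rfl t) + ℓ (T.orderEmbOfFin rfl s) ≤ L
                then 0 else w t * w s) := by
        intro w
        rw [Finset.sum_mul_sum, ← Finset.sum_sub_distrib]
        refine Finset.sum_congr rfl fun t _ => ?_
        rw [← Finset.sum_sub_distrib]
        refine Finset.sum_congr rfl fun s _ => ?_
        by_cases h : ℓ (T.orderEmbOfFin rfl t) + ℓ (T.orderEmbOfFin rfl s) ≤ L
        · simp [h]
        · simp [h]
      have hw1 : ∑ t : Fin T.card, p (T.orderEmbOfFin rfl t) = ∑ i ∈ T, p i :=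
        (sum_orderEmbOfFin T rfl p).symm
      have hw2 : ∑ t : Fin T.card, p (k₁ + jj + (t : ℕ)) = ∑ i ∈ Finset.Icc (k₁ + jj) k₂, p i :=
        (sum_Icc_fin _ _ hQcard p).symm
      have hDle : ∑ t : Fin T.card, ∑ s : Fin T.card,
            (if ℓ (T.orderEmbOfFin rfl t) + ℓ (T.orderEmbOfFin rfl s) ≤ L
              then 0 else p (k₁ + jj + (t : ℕ)) * p (k₁ + jj + (s : ℕ)))
          ≤ ∑ t : Fin T.card, ∑ s : Fin T.card,
            (if ℓ (T.orderEmbOfFin rfl t) + ℓ (T.orderEmbOfFin rfl s) ≤ L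
              then 0 else p (T.orderEmbOfFin rfl t) * p (T.orderEmbOfFin rfl s)) := by
        refine Finset.sum_le_sum fun t _ => Finset.sum_le_sum fun s _ => ?_
        by_cases h : ℓ (T.orderEmbOfFin rfl t) + ℓ (T.orderEmbOfFin rfl s) ≤ L
        · simp [h]
        · simp only [if_neg h]
          have ht := t.isLt
          have hs := s.isLt
          have hτt := hτle t
          have hτs := hτle s
          have hτtb := hTsub _ (hτmem t)
          have hτsb := hTsub _ (hτmem s)
          have e1 : p (k₁ + jj + (t : ℕ)) ≤ p (T.orderEmbOfFin rfl t) :=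
            hpm _ _ (by omega) hτt (by omega)
          have e2 : p (k₁ + jj + (s : ℕ)) ≤ p (T.orderEmbOfFin rfl s) :=
            hpm _ _ (by omega) hτs (by omega)
          have pos1 : 0 < p (k₁ + jj + (s : ℕ)) := hppos _ (by omega) (by omega)
          have pos2 : 0 < p (T.orderEmbOfFin rfl t) := hppos _ (by omega) (by omega)
          exact mul_le_mul e1 e2 (le_of_lt pos1) (le_of_lt pos2)
      -- splitting of total p-mass
      have hPsplit : (∑ i ∈ S, p i) + ∑ i ∈ T, p i = ∑ i ∈ Finset.Icc k₁ k₂, p i := by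
        rw [hS, hT]; exact Finset.sum_filter_add_sum_filter_not _ _ _
      have hPsplit2 : ∑ i ∈ Finset.Icc k₁ k₂, p i
          = (∑ i ∈ Finset.Icc k₁ (k₁ + jj - 1), p i) + ∑ i ∈ Finset.Icc (k₁ + jj) k₂, p i :=
        sum_Icc_split p k₁ k₂ jj hk1 (by omega)
      rw [e0, hDT, hprof2, hsplitite, hsplitite, hw1, hw2]
      have e1 : (∑ i ∈ S, p i) * (∑ i' ∈ Finset.Icc k₁ k₂, p i')
          + ((∑ i ∈ T, p i) * (∑ i' ∈ S, p i') + (∑ i ∈ T, p i) * (∑ i ∈ T, p i))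
          = (∑ i ∈ Finset.Icc k₁ k₂, p i) * (∑ i ∈ Finset.Icc k₁ k₂, p i) := by
        rw [← hPsplit]; ring
      have e2 : (∑ i ∈ Finset.Icc (k₁ + jj) k₂, p i) * (∑ i ∈ Finset.Icc (k₁ + jj) k₂, p i)
          + ((∑ i ∈ Finset.Icc k₁ (k₁ + jj - 1), p i) * (∑ i ∈ Finset.Icc k₁ k₂, p i) +
            (∑ i ∈ Finset.Icc (k₁ + jj) k₂, p i) * (∑ i ∈ Finset.Icc k₁ (k₁ + jj - 1), p i))
          = (∑ i ∈ Finset.Icc k₁ k₂, p i) * (∑ i ∈ Finset.Icc k₁ k₂, p i) := by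
        rw [hPsplit2]; ring
      linarith [hDle, e1, e2]
    calc ((∑ i ∈ Finset.Icc k₁ k₂, ∑ i' ∈ Finset.Icc k₁ k₂,
          if ℓ i + ℓ i' ≤ L then p i * p i' else 0 : ℝ) : EReal)
        ≤ (((∑ i ∈ Finset.Icc (k₁ + jj) k₂, ∑ i' ∈ Finset.Icc (k₁ + jj) k₂,
            if ℓ₂ i + ℓ₂ i' ≤ L then p i * p i' else 0) +
          ((∑ i ∈ Finset.Icc k₁ (k₁ + jj - 1), p i) * (∑ i ∈ Finset.Icc k₁ k₂, p i) +
            (∑ i ∈ Finset.Icc (k₁ + jj) k₂, p i) * (∑ i ∈ Finset.Icc k₁ (k₁ + jj - 1), p i)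
            : ℝ) : ℝ) : EReal) := EReal.coe_le_coe_iff.2 hkey
      _ = ((∑ i ∈ Finset.Icc (k₁ + jj) k₂, ∑ i' ∈ Finset.Icc (k₁ + jj) k₂,
            if ℓ₂ i + ℓ₂ i' ≤ L then p i * p i' else 0 : ℝ) : EReal) +
          (((∑ i ∈ Finset.Icc k₁ (k₁ + jj - 1), p i) * (∑ i ∈ Finset.Icc k₁ k₂, p i) +
            (∑ i ∈ Finset.Icc (k₁ + jj) k₂, p i) * (∑ i ∈ Finset.Icc k₁ (k₁ + jj - 1), p i)
            : ℝ) : EReal) := EReal.coe_add _ _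
      _ ≤ G p L A (k₁ + jj) k₂ (N - (jj : ℤ) * 2 ^ (L - l')) +
          (((∑ i ∈ Finset.Icc k₁ (k₁ + jj - 1), p i) * (∑ i ∈ Finset.Icc k₁ k₂, p i) +
            (∑ i ∈ Finset.Icc (k₁ + jj) k₂, p i) * (∑ i ∈ Finset.Icc k₁ (k₁ + jj - 1), p i)
            : ℝ) : EReal) := add_le_add hG2 (le_refl _)
  · -- RHS ≤ LHS
    apply iSup_le
    intro j
    apply iSup_le
    intro hj
    have hjle : j ≤ k₂ - k₁ + 1 := (Finset.mem_Icc.mp hj).2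
    rw [← EReal.le_sub_iff_add_le (Or.inl (EReal.coe_ne_bot _)) (Or.inl (EReal.coe_ne_top _))]
    apply sSup_le
    rintro x ⟨ℓ, hmemℓ, hbud, rfl⟩
    rw [EReal.le_sub_iff_add_le (Or.inl (EReal.coe_ne_bot _)) (Or.inl (EReal.coe_ne_top _)),
      ← EReal.coe_add]
    set ℓ' : ℕ → ℕ := fun i => if i < k₁ + j then l' else ℓ i with hℓ'def
    have hℓ'P : ∀ i ∈ Finset.Icc k₁ (k₁ + j - 1), ℓ' i = l' := by
      intro i hi
      have := Finset.mem_Icc.mp hi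
      simp only [hℓ'def]
      rw [if_pos (by omega)]
    have hℓ'Q : ∀ i ∈ Finset.Icc (k₁ + j) k₂, ℓ' i = ℓ i := by
      intro i hi
      have := Finset.mem_Icc.mp hi
      simp only [hℓ'def]
      rw [if_neg (by omega)]
    have hℓ'mem : ∀ i ∈ Finset.Icc k₁ k₂, ℓ' i ∈ A ∪ {l'} := by
      intro i hi
      have hi' := Finset.mem_Icc.mp hi
      by_cases h : i < k₁ + j
      · simp only [hℓ'def]
        rw [if_pos h]
        exact Finset.mem_union_right _ (Finset.mem_singleton_self _)
      · simp only [hℓ'def]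
        rw [if_neg h]
        exact Finset.mem_union_left _ (hmemℓ i (Finset.mem_Icc.2 ⟨by omega, hi'.2⟩))
    have hub' : ∀ i ∈ Finset.Icc k₁ k₂, ℓ' i ≤ L / 2 + d := fun i hi => hub _ (hℓ'mem i hi)
    have hbud' : ∑ i ∈ Finset.Icc k₁ k₂, (2 : ℤ) ^ (L - ℓ' i) ≤ N := by
      rw [sum_Icc_split (fun i => (2 : ℤ) ^ (L - ℓ' i)) k₁ k₂ j hk1 (by omega)]
      have hP1 : ∑ i ∈ Finset.Icc k₁ (k₁ + j - 1), (2 : ℤ) ^ (L - ℓ' i)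
          = (j : ℤ) * 2 ^ (L - l') := by
        rw [Finset.sum_congr rfl (fun i hi => by rw [hℓ'P i hi]), Finset.sum_const,
          Nat.card_Icc, nsmul_eq_mul]
        congr 1
        omega
      have hP2 : ∑ i ∈ Finset.Icc (k₁ + j) k₂, (2 : ℤ) ^ (L - ℓ' i)
          = ∑ i ∈ Finset.Icc (k₁ + j) k₂, (2 : ℤ) ^ (L - ℓ i) :=
        Finset.sum_congr rfl (fun i hi => by rw [hℓ'Q i hi])
      rw [hP1, hP2]
      linarith [hbud]
    apply le_sSup
    refine ⟨ℓ', hℓ'mem, hbud', ?_⟩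
    rw [EReal.coe_eq_coe_iff]
    rw [sum_Icc_split (fun i => ∑ i' ∈ Finset.Icc k₁ k₂,
      if ℓ' i + ℓ' i' ≤ L then p i * p i' else 0) k₁ k₂ j hk1 (by omega)]
    have hrow1 : ∀ i ∈ Finset.Icc k₁ (k₁ + j - 1),
        (∑ i' ∈ Finset.Icc k₁ k₂, if ℓ' i + ℓ' i' ≤ L then p i * p i' else 0)
          = p i * ∑ i' ∈ Finset.Icc k₁ k₂, p i' := by
      intro i hi
      rw [Finset.mul_sum]
      refine Finset.sum_congr rfl fun i' hi' => ?_
      have hi'' := Finset.mem_Icc.mp hi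
      have hiI : i ∈ Finset.Icc k₁ k₂ := Finset.mem_Icc.2 ⟨by omega, by omega⟩
      rw [if_pos (hcondl _ _ (hub' i hiI) (Or.inl (hℓ'P i hi)) (hub' i' hi'))]
    have hrow2 : ∀ i ∈ Finset.Icc (k₁ + j) k₂,
        (∑ i' ∈ Finset.Icc k₁ k₂, if ℓ' i + ℓ' i' ≤ L then p i * p i' else 0)
          = p i * (∑ i' ∈ Finset.Icc k₁ (k₁ + j - 1), p i')
            + ∑ i' ∈ Finset.Icc (k₁ + j) k₂, (if ℓ i + ℓ i' ≤ L then p i * p i' else 0) := by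
      intro i hi
      have hi'' := Finset.mem_Icc.mp hi
      have hiI : i ∈ Finset.Icc k₁ k₂ := Finset.mem_Icc.2 ⟨by omega, hi''.2⟩
      rw [sum_Icc_split (fun i' => if ℓ' i + ℓ' i' ≤ L then p i * p i' else 0) k₁ k₂ j hk1
        (by omega)]
      congr 1
      · rw [Finset.mul_sum]
        refine Finset.sum_congr rfl fun i' hi' => ?_
        have hi'I : i' ∈ Finset.Icc k₁ k₂ := by
          have := Finset.mem_Icc.mp hi'
          exact Finset.mem_Icc.2 ⟨by omega, by omega⟩
        rw [if_pos (hcondl _ _ (hub' i hiI) (Or.inr (hℓ'P i' hi')) (hub' i' hi'I))]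
      · refine Finset.sum_congr rfl fun i' hi' => ?_
        rw [hℓ'Q i hi, hℓ'Q i' hi']
    rw [Finset.sum_congr rfl hrow1, Finset.sum_congr rfl hrow2, Finset.sum_add_distrib,
      ← Finset.sum_mul, ← Finset.sum_mul]
    ring
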